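/- Let L be a field equipped with a non-archimedean additive valuation v : L → ℝ ∪ {∞} such that v(n·1_L) = 0 for every nonzero integer n, with valuation ring A = {v ≥ 0}, maximal ideal M = {v > 0}, and residue field K = A/M. Let t ≥ 1 and b ∈ ℕ. If every nonzero polynomial in K[x] with at most t+1 nonzero terms has at most b roots in K \ {0} counted with multiplicities, then every nonzero polynomial in L[x] with at most t+1 nonzero terms has at most t²·b roots in L \ {0} counted with multiplicities. The same implication holds with distinct roots in place of roots counted with multiplicities on both sides. In other words, B₁(t,L) ≤ t²·B₁(t,K) and B_m(t,L) ≤ t²·B_m(t,K). -/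

import Mathlib

open scoped Classical

/-- The valuation ring `A = {x : 0 ≤ v x}` of a non-archimedean additive
valuation `v : L → ℝ ∪ {∞}`. -/
def valRing (L : Type*) [Field L] (v : L → WithTop ℝ)
    (hv0 : ∀ x, v x = ⊤ ↔ x = 0)
    (hvmul : ∀ x y, v (x * y) = v x + v y)
    (hvadd : ∀ x y, min (v x) (v y) ≤ v (x + y)) : Subring L where
  carrier := {x | 0 ≤ v x}
  zero_mem' := by
    simp only [Set.mem_setOf_eq, (hv0 0).mpr rfl]
    exact le_top
  one_mem' := by
    simp only [Set.mem_setOf_eq]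
    have h := hvmul 1 1
    rw [one_mul] at h
    by_cases hT : v 1 = ⊤
    · rw [hT]; exact le_top
    · obtain ⟨a, ha⟩ := WithTop.ne_top_iff_exists.mp hT
      rw [← ha] at h ⊢
      rw [← WithTop.coe_add, WithTop.coe_eq_coe] at h
      have : a = 0 := by linarith
      simp [this]
  add_mem' := fun hx hy => le_trans (le_min hx hy) (hvadd _ _)
  mul_mem' := fun {x y} hx hy => by
    have h := hvmul x y
    simp only [Set.mem_setOf_eq] at *
    rw [h]
    exact add_nonneg hx hy
  neg_mem' := fun {x} hx => by
    simp only [Set.mem_setOf_eq] at *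
    have hone : (0 : WithTop ℝ) ≤ v 1 := by
      have h := hvmul 1 1
      rw [one_mul] at h
      by_cases hT : v 1 = ⊤
      · rw [hT]; exact le_top
      · obtain ⟨a, ha⟩ := WithTop.ne_top_iff_exists.mp hT
        rw [← ha] at h ⊢
        rw [← WithTop.coe_add, WithTop.coe_eq_coe] at h
        have : a = 0 := by linarith
        simp [this]
    have h := hvmul (-1) x
    rw [neg_one_mul] at h
    rw [h]
    have hm1 : (0 : WithTop ℝ) ≤ v (-1) := by
      have h2 := hvmul (-1) (-1)
      rw [neg_one_mul, neg_neg] at h2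
      by_cases hT : v (-1) = ⊤
      · rw [hT]; exact le_top
      · obtain ⟨a, ha⟩ := WithTop.ne_top_iff_exists.mp hT
        rw [← ha]
        have h3 := hvmul 1 1
        rw [one_mul] at h3
        have h1T : v 1 ≠ ⊤ := by
          intro habs
          exact one_ne_zero ((hv0 1).mp habs)
        obtain ⟨b, hb⟩ := WithTop.ne_top_iff_exists.mp h1T
        rw [← hb, ← ha, ← WithTop.coe_add, WithTop.coe_eq_coe] at h2
        rw [← hb, ← WithTop.coe_add, WithTop.coe_eq_coe] at h3
        have hb0 : b = 0 := by linarith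
        have ha0 : a = 0 := by rw [hb0] at h2; linarith
        simp [ha0]
    exact add_nonneg hm1 hx

/-- The maximal ideal `M = {x : 0 < v x}` of the valuation ring. -/
def valIdeal (L : Type*) [Field L] (v : L → WithTop ℝ)
    (hv0 : ∀ x, v x = ⊤ ↔ x = 0)
    (hvmul : ∀ x y, v (x * y) = v x + v y)
    (hvadd : ∀ x y, min (v x) (v y) ≤ v (x + y)) :
    Ideal (valRing L v hv0 hvmul hvadd) where
  carrier := {x | 0 < v (x : L)}
  zero_mem' := by
    simp only [Set.mem_setOf_eq, ZeroMemClass.coe_zero, (hv0 0).mpr rfl]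
    exact WithTop.coe_lt_top 0
  add_mem' := fun {x y} hx hy =>
    lt_of_lt_of_le (lt_min hx hy) (hvadd _ _)
  smul_mem' := fun c x hx => by
    simp only [Set.mem_setOf_eq, smul_eq_mul, Subring.coe_mul] at *
    rw [hvmul]
    calc (0 : WithTop ℝ) < v (x : L) := hx
      _ = 0 + v (x : L) := (zero_add _).symm
      _ ≤ v (c : L) + v (x : L) := add_le_add c.2 le_rfl


open scoped Classical
open Polynomial

section Aux

variable {L : Type*} [Field L] {v : L → WithTop ℝ}

lemma vmy_netop (hv0 : ∀ x, v x = ⊤ ↔ x = 0) {x : L} (hx : x ≠ 0) : v x ≠ ⊤ :=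
  fun h => hx ((hv0 x).mp h)

lemma vmy_one (hv0 : ∀ x, v x = ⊤ ↔ x = 0) (hvmul : ∀ x y, v (x * y) = v x + v y) :
    v 1 = 0 := by
  have h := hvmul 1 1
  rw [one_mul] at h
  obtain ⟨a, ha⟩ := WithTop.ne_top_iff_exists.mp (vmy_netop hv0 (one_ne_zero (α := L)))
  rw [← ha, ← WithTop.coe_add] at h
  norm_cast at h
  rw [← ha]
  norm_cast
  linarith

lemma vmy_negone (hv0 : ∀ x, v x = ⊤ ↔ x = 0) (hvmul : ∀ x y, v (x * y) = v x + v y) :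
    v (-1) = 0 := by
  have h := hvmul (-1) (-1)
  rw [neg_one_mul, neg_neg, vmy_one hv0 hvmul] at h
  obtain ⟨a, ha⟩ := WithTop.ne_top_iff_exists.mp (vmy_netop hv0 (neg_ne_zero.mpr (one_ne_zero (α := L))))
  rw [← ha, ← WithTop.coe_add] at h
  norm_cast at h
  rw [← ha]
  norm_cast
  linarith

lemma vmy_neg (hv0 : ∀ x, v x = ⊤ ↔ x = 0) (hvmul : ∀ x y, v (x * y) = v x + v y) (x : L) :
    v (-x) = v x := by
  have h := hvmul (-1) x
  rw [neg_one_mul, vmy_negone hv0 hvmul, zero_add] at h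
  exact h

lemma vmy_inv (hv0 : ∀ x, v x = ⊤ ↔ x = 0) (hvmul : ∀ x y, v (x * y) = v x + v y)
    {x : L} (hx : x ≠ 0) : v x + v x⁻¹ = 0 := by
  have h := hvmul x x⁻¹
  rw [mul_inv_cancel₀ hx, vmy_one hv0 hvmul] at h
  exact h.symm

lemma vmy_pow (hv0 : ∀ x, v x = ⊤ ↔ x = 0) (hvmul : ∀ x y, v (x * y) = v x + v y)
    (x : L) (r : ℝ) (hx : v x = (r : WithTop ℝ)) (n : ℕ) :
    v (x ^ n) = (((n : ℝ) * r : ℝ) : WithTop ℝ) := by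
  induction n with
  | zero => simp [vmy_one hv0 hvmul]
  | succ n ih =>
      rw [pow_succ, hvmul, ih, hx, ← WithTop.coe_add, WithTop.coe_eq_coe]
      push_cast
      ring

lemma vmy_exists_real (hv0 : ∀ x, v x = ⊤ ↔ x = 0) {x : L} (hx : x ≠ 0) :
    ∃ r : ℝ, v x = (r : WithTop ℝ) := by
  obtain ⟨a, ha⟩ := WithTop.ne_top_iff_exists.mp (vmy_netop hv0 hx)
  exact ⟨a, ha.symm⟩

lemma vsum_lt (hv0 : ∀ x, v x = ⊤ ↔ x = 0)
    (hvadd : ∀ x y, min (v x) (v y) ≤ v (x + y))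
    (g : ℕ → L) (b : WithTop ℝ) (hb : b ≠ ⊤) :
    ∀ (s : Finset ℕ), (∀ j ∈ s, b < v (g j)) → b < v (∑ j ∈ s, g j) := by
  intro s
  induction s using Finset.induction_on with
  | empty =>
      intro _
      simp only [Finset.sum_empty]
      rw [(hv0 0).mpr rfl]
      exact lt_top_iff_ne_top.mpr hb
  | insert _ _ hns ih =>
      intro hall
      rw [Finset.sum_insert hns]
      refine lt_of_lt_of_le (lt_min ?_ ?_) (hvadd _ _)
      · exact hall _ (Finset.mem_insert_self _ _)
      · exact ih fun j hj => hall j (Finset.mem_insert_of_mem hj)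

lemma vsum_eq (hv0 : ∀ x, v x = ⊤ ↔ x = 0) (hvmul : ∀ x y, v (x * y) = v x + v y)
    (hvadd : ∀ x y, min (v x) (v y) ≤ v (x + y))
    (s : Finset ℕ) (g : ℕ → L) (i₀ : ℕ) (hi₀ : i₀ ∈ s) (hne : g i₀ ≠ 0)
    (hstrict : ∀ j ∈ s, j ≠ i₀ → v (g i₀) < v (g j)) :
    v (∑ j ∈ s, g j) = v (g i₀) := by
  have hbne : v (g i₀) ≠ ⊤ := vmy_netop hv0 hne
  set T := ∑ j ∈ s.erase i₀, g j with hT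
  have hsum : g i₀ + T = ∑ j ∈ s, g j := Finset.add_sum_erase s g hi₀
  have hTlt : v (g i₀) < v T :=
    vsum_lt hv0 hvadd g _ hbne _ fun j hj =>
      hstrict j (Finset.mem_of_mem_erase hj) (Finset.ne_of_mem_erase hj)
  rw [← hsum]
  refine le_antisymm ?_ ?_
  · by_contra hlt
    push_neg at hlt
    have h2 : g i₀ = (g i₀ + T) + (-T) := by ring
    have h3 : v (g i₀) < v (g i₀) := by
      calc v (g i₀) < min (v (g i₀ + T)) (v (-T)) := by
              rw [vmy_neg hv0 hvmul]
              exact lt_min hlt hTlt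
        _ ≤ v ((g i₀ + T) + (-T)) := hvadd _ _
        _ = v (g i₀) := by rw [← h2]
    exact absurd h3 (lt_irrefl _)
  · calc v (g i₀) = min (v (g i₀)) (v T) := (min_eq_left hTlt.le).symm
      _ ≤ v (g i₀ + T) := hvadd _ _

end Aux
section Quot

variable {L : Type*} [Field L] {v : L → WithTop ℝ}
variable (hv0 : ∀ x, v x = ⊤ ↔ x = 0)
variable (hvmul : ∀ x y, v (x * y) = v x + v y)
variable (hvadd : ∀ x y, min (v x) (v y) ≤ v (x + y))

lemma mem_valRing {x : L} : x ∈ valRing L v hv0 hvmul hvadd ↔ 0 ≤ v x := Iff.rfl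

lemma mem_valIdeal {x : valRing L v hv0 hvmul hvadd} :
    x ∈ valIdeal L v hv0 hvmul hvadd ↔ 0 < v (x : L) := Iff.rfl

lemma valIdeal_isMaximal : (valIdeal L v hv0 hvmul hvadd).IsMaximal := by
  rw [Ideal.isMaximal_iff]
  constructor
  · rw [mem_valIdeal hv0 hvmul hvadd]
    simp only [OneMemClass.coe_one, vmy_one hv0 hvmul]
    exact lt_irrefl 0
  · rintro J x hMJ hxM hxJ
    have hx0 : 0 ≤ v (x : L) := x.2
    have hxv : v (x : L) = 0 := le_antisymm (not_lt.mp (fun h => hxM ((mem_valIdeal hv0 hvmul hvadd).mpr h))) hx0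
    have hxne : (x : L) ≠ 0 := by
      intro h
      rw [h, (hv0 0).mpr rfl] at hxv
      simp at hxv
    have hinvmem : (x : L)⁻¹ ∈ valRing L v hv0 hvmul hvadd := by
      rw [mem_valRing]
      have := vmy_inv hv0 hvmul hxne
      rw [hxv, zero_add] at this
      rw [this]
    set y : valRing L v hv0 hvmul hvadd := ⟨(x : L)⁻¹, hinvmem⟩
    have : y * x = 1 := by
      apply Subtype.ext
      simp [y, inv_mul_cancel₀ hxne]
    rw [← this]
    exact J.mul_mem_left y hxJ

lemma valQuot_isDomain :
    IsDomain ((valRing L v hv0 hvmul hvadd) ⧸ (valIdeal L v hv0 hvmul hvadd)) := by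
  haveI := valIdeal_isMaximal hv0 hvmul hvadd
  infer_instance

lemma valQuot_charZero (hvint : ∀ n : ℤ, n ≠ 0 → v ((n : ℤ) : L) = 0) :
    CharZero ((valRing L v hv0 hvmul hvadd) ⧸ (valIdeal L v hv0 hvmul hvadd)) := by
  apply charZero_of_inj_zero
  intro n hn
  by_contra hne
  rw [show ((n : ℕ) : (valRing L v hv0 hvmul hvadd) ⧸ (valIdeal L v hv0 hvmul hvadd)) =
      (Ideal.Quotient.mk (valIdeal L v hv0 hvmul hvadd)) ((n : ℕ) : valRing L v hv0 hvmul hvadd)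
      from (map_natCast _ n).symm, Ideal.Quotient.eq_zero_iff_mem, mem_valIdeal hv0 hvmul hvadd] at hn
  have hcast : (((n : ℕ) : valRing L v hv0 hvmul hvadd) : L) = ((n : ℤ) : L) := by
    push_cast
    rfl
  rw [hcast, hvint n (by exact_mod_cast hne)] at hn
  exact lt_irrefl 0 hn

end Quot
section Mult

variable {R : Type*} [CommRing R] [IsDomain R] [CharZero R]

omit [IsDomain R] [CharZero R] in
lemma support_X_mul_card (h : R[X]) : (X * h).support.card = h.support.card := by
  have hs : (X * h).support = h.support.image (· + 1) := by
    ext n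
    cases n with
    | zero =>
        simp [Polynomial.mem_support_iff, Polynomial.mul_coeff_zero]
    | succ k =>
        simp [Polynomial.mem_support_iff, Polynomial.coeff_X_mul]
  rw [hs, Finset.card_image_of_injective _ (add_left_injective 1)]

lemma rootMultiplicity_lt_card_support :
    ∀ n (g : R[X]), g.natDegree ≤ n → g ≠ 0 → ∀ r : R, r ≠ 0 →
      g.rootMultiplicity r < g.support.card := by
  intro n
  induction n with
  | zero =>
      intro g hdeg hg r hr
      have hcard : 0 < g.support.card :=
        Finset.card_pos.mpr (Polynomial.support_nonempty.mpr hg)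
      have hz : g.rootMultiplicity r = 0 := by
        apply Polynomial.rootMultiplicity_eq_zero
        intro hroot
        have hC := Polynomial.eq_C_of_natDegree_le_zero hdeg
        rw [hC] at hroot
        simp only [Polynomial.IsRoot, Polynomial.eval_C] at hroot
        exact hg (by rw [hC, hroot, map_zero])
      omega
  | succ n ih =>
      intro g hdeg hg r hr
      by_cases h0 : g.rootMultiplicity r = 0
      · have hcard : 0 < g.support.card :=
          Finset.card_pos.mpr (Polynomial.support_nonempty.mpr hg)
        omega
      have hroot : g.IsRoot r := by
        by_contra hnr
        exact h0 (Polynomial.rootMultiplicity_eq_zero hnr)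
      by_cases hc0 : g.coeff 0 = 0
      · obtain ⟨h, hXh⟩ := Polynomial.X_dvd_iff.mpr hc0
        have hh : h ≠ 0 := fun hh0 => hg (by rw [hXh, hh0, mul_zero])
        have hdegh : h.natDegree ≤ n := by
          have hd : g.natDegree = 1 + h.natDegree := by
            rw [hXh, Polynomial.natDegree_mul Polynomial.X_ne_zero hh, Polynomial.natDegree_X]
          omega
        have hXroot : Polynomial.rootMultiplicity r (Polynomial.X : R[X]) = 0 := by
          apply Polynomial.rootMultiplicity_eq_zero
          simpa [Polynomial.IsRoot] using hr
        have hmul : g.rootMultiplicity r = h.rootMultiplicity r := by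
          rw [hXh, Polynomial.rootMultiplicity_mul (by rw [← hXh]; exact hg), hXroot, zero_add]
        have hcards : g.support.card = h.support.card := by
          rw [hXh, support_X_mul_card]
        rw [hmul, hcards]
        exact ih h hdegh hh r hr
      · set e := g.rootMultiplicity r with he
        have he1 : 1 ≤ e := Nat.one_le_iff_ne_zero.mpr h0
        have hdg : g.natDegree ≠ 0 := by
          intro hd0
          have hC := Polynomial.eq_C_of_natDegree_eq_zero hd0
          rw [hC] at hroot
          simp only [Polynomial.IsRoot, Polynomial.eval_C] at hroot
          exact hc0 hroot
        have hg' : Polynomial.derivative g ≠ 0 := by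
          intro h'
          exact hdg (Polynomial.natDegree_eq_zero_of_derivative_eq_zero h')
        have hd' : (Polynomial.derivative g).natDegree ≤ n := by
          have := Polynomial.natDegree_derivative_lt hdg
          omega
        obtain ⟨w, hw⟩ := Polynomial.pow_rootMultiplicity_dvd g r
        have hdvd' : (Polynomial.X - Polynomial.C r) ^ (e - 1) ∣ Polynomial.derivative g := by
          rw [hw, Polynomial.derivative_mul, Polynomial.derivative_pow]
          apply dvd_add
          · exact dvd_mul_of_dvd_left (dvd_mul_of_dvd_left (dvd_mul_left _ _) _) _
          · exact dvd_mul_of_dvd_left (pow_dvd_pow _ (Nat.sub_le e 1)) _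
        have hle : e - 1 ≤ (Polynomial.derivative g).rootMultiplicity r :=
          (Polynomial.le_rootMultiplicity_iff hg').mpr hdvd'
        have hsub : (Polynomial.derivative g).support ⊆ (g.support.erase 0).image (· - 1) := by
          intro i hi
          rw [Polynomial.mem_support_iff, Polynomial.coeff_derivative] at hi
          have hgi : g.coeff (i + 1) ≠ 0 := fun h => hi (by rw [h, zero_mul])
          exact Finset.mem_image.mpr ⟨i + 1,
            Finset.mem_erase.mpr ⟨Nat.succ_ne_zero i, Polynomial.mem_support_iff.mpr hgi⟩,
            by omega⟩
        have hsupp' : (Polynomial.derivative g).support.card < g.support.card :=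
          calc (Polynomial.derivative g).support.card
              ≤ ((g.support.erase 0).image (· - 1)).card := Finset.card_le_card hsub
            _ ≤ (g.support.erase 0).card := Finset.card_image_le
            _ < g.support.card :=
                Finset.card_erase_lt_of_mem (Polynomial.mem_support_iff.mpr hc0)
        have hih := ih (Polynomial.derivative g) hd' hg' r hr
        omega

end Mult
section Constr

variable {L : Type*} [Field L] {v : L → WithTop ℝ}
variable (hv0 : ∀ x, v x = ⊤ ↔ x = 0)
variable (hvmul : ∀ x y, v (x * y) = v x + v y)
variable (hvadd : ∀ x y, min (v x) (v y) ≤ v (x + y))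

omit hv0 hvmul hvadd in
lemma coeff_comp_C_mul_X (f : L[X]) (c : L) (i : ℕ) :
    (f.comp (Polynomial.C c * Polynomial.X)).coeff i = f.coeff i * c ^ i := by
  induction f using Polynomial.induction_on' with
  | add p q hp hq => simp [Polynomial.add_comp, hp, hq, add_mul]
  | monomial n a =>
      rw [← Polynomial.C_mul_X_pow_eq_monomial, Polynomial.mul_comp, Polynomial.C_comp,
        Polynomial.X_pow_comp, mul_pow, ← Polynomial.C_pow, ← mul_assoc, ← Polynomial.C_mul]
      simp only [Polynomial.coeff_C_mul, Polynomial.coeff_X_pow]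
      split_ifs with h
      · subst h; ring
      · simp

omit hv0 hvmul hvadd in
lemma support_comp_C_mul_X (f : L[X]) {c : L} (hc : c ≠ 0) :
    (f.comp (Polynomial.C c * Polynomial.X)).support = f.support := by
  ext i
  simp only [Polynomial.mem_support_iff, coeff_comp_C_mul_X, mul_ne_zero_iff]
  exact ⟨fun h => h.1, fun h => ⟨h, pow_ne_zero _ hc⟩⟩

lemma construct (f : L[X]) (hf : f ≠ 0) (c : L) (hc : c ≠ 0)
    (m : Multiset L) (hm : ∀ β ∈ m, β ≠ 0 ∧ v β = v c)
    (hdvd : (m.map (fun β => Polynomial.X - Polynomial.C β)).prod ∣ f) :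
    ∃ (Hb : Polynomial ((valRing L v hv0 hvmul hvadd) ⧸ (valIdeal L v hv0 hvmul hvadd)))
      (w : Multiset ((valRing L v hv0 hvmul hvadd) ⧸ (valIdeal L v hv0 hvmul hvadd))),
      Hb ≠ 0 ∧ Hb.support.card ≤ f.support.card ∧
      Multiset.card w = Multiset.card m ∧ (∀ r ∈ w, r ≠ 0) ∧
      (w.map (fun r => Polynomial.X - Polynomial.C r)).prod ∣ Hb := by
  set g := f.comp (Polynomial.C c * Polynomial.X) with hgdef
  have hgcoeff : ∀ i, g.coeff i = f.coeff i * c ^ i := coeff_comp_C_mul_X f c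
  have hgsupp : g.support = f.support := support_comp_C_mul_X f hc
  have hgne : g ≠ 0 := by
    rw [← Polynomial.support_nonempty] at hf ⊢
    rw [hgsupp]; exact hf
  obtain ⟨i₀, hi₀s, hi₀min⟩ := Finset.exists_min_image g.support (fun i => v (g.coeff i))
    (Polynomial.support_nonempty.mpr hgne)
  have hgi₀ : g.coeff i₀ ≠ 0 := Polynomial.mem_support_iff.mp hi₀s
  set d := (g.coeff i₀)⁻¹ with hddef
  have hd0 : v (g.coeff i₀) + v d = 0 := vmy_inv hv0 hvmul hgi₀
  have hmem : ∀ i, 0 ≤ v (d * g.coeff i) := by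
    intro i
    by_cases hi : i ∈ g.support
    · rw [hvmul]
      calc (0 : WithTop ℝ) = v d + v (g.coeff i₀) := by rw [add_comm] at hd0; exact hd0.symm
        _ ≤ v d + v (g.coeff i) := add_le_add_right (hi₀min i hi) _
    · rw [Polynomial.notMem_support_iff.mp hi, mul_zero, (hv0 0).mpr rfl]
      exact le_top
  -- the integral polynomial H
  set D : ℕ → (valRing L v hv0 hvmul hvadd) := fun i => ⟨d * g.coeff i, hmem i⟩ with hDdef
  set H : Polynomial (valRing L v hv0 hvmul hvadd) :=
    ∑ i ∈ g.support, Polynomial.monomial i (D i) with hHdef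
  have hHcoeff : ∀ j, H.coeff j = D j := by
    intro j
    rw [hHdef, Polynomial.finset_sum_coeff]
    simp only [Polynomial.coeff_monomial]
    rw [Finset.sum_ite_eq' g.support j D]
    split_ifs with hj
    · rfl
    · apply Subtype.ext
      show (0 : L) = d * g.coeff j
      rw [Polynomial.notMem_support_iff.mp hj, mul_zero]
  have hHcoe : ∀ j, ((H.coeff j : valRing L v hv0 hvmul hvadd) : L) = d * g.coeff j := by
    intro j; rw [hHcoeff]
  have hHsupp : H.support ⊆ f.support := by
    intro j hj
    rw [Polynomial.mem_support_iff] at hj ⊢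
    intro hfj
    apply hj
    apply Subtype.ext
    show (H.coeff j : L) = (0 : L)
    rw [hHcoe, hgcoeff, hfj, zero_mul, mul_zero]
  have hHmap : H.map (valRing L v hv0 hvmul hvadd).subtype = Polynomial.C d * g := by
    ext j
    rw [Polynomial.coeff_map, Polynomial.coeff_C_mul]
    exact hHcoe j
  -- the reduced polynomial Hb
  set mkq := Ideal.Quotient.mk (valIdeal L v hv0 hvmul hvadd) with hmkq
  set Hb := H.map mkq with hHb
  have hvdi₀ : v (d * g.coeff i₀) = 0 := by rw [hvmul, add_comm]; exact hd0
  have hHbne : Hb ≠ 0 := by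
    intro h
    have : Hb.coeff i₀ = 0 := by rw [h, Polynomial.coeff_zero]
    rw [hHb, Polynomial.coeff_map, hHcoeff] at this
    rw [hmkq, Ideal.Quotient.eq_zero_iff_mem, mem_valIdeal hv0 hvmul hvadd] at this
    change 0 < v (d * g.coeff i₀) at this
    rw [hvdi₀] at this
    exact lt_irrefl 0 this
  have hHbsupp : Hb.support.card ≤ f.support.card :=
    Finset.card_le_card ((Polynomial.support_map_subset _ _).trans hHsupp)
  -- the units
  have hub : ∀ β : L, β ∈ m → v (β * c⁻¹) = 0 := by
    intro β hβ
    rw [hvmul, (hm β hβ).2]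
    exact vmy_inv hv0 hvmul hc
  set ub : {x // x ∈ m} → (valRing L v hv0 hvmul hvadd) :=
    fun β => ⟨β.1 * c⁻¹, by rw [mem_valRing hv0 hvmul hvadd, hub β.1 β.2]⟩ with hubdef
  set P : Polynomial (valRing L v hv0 hvmul hvadd) :=
    (m.attach.map (fun β => Polynomial.X - Polynomial.C (ub β))).prod with hPdef
  have hPmonic : P.Monic :=
    Polynomial.monic_multiset_prod_of_monic _ _ (fun i _ => Polynomial.monic_X_sub_C _)
  -- divisibility over L
  have hdvdg : (m.map (fun β => Polynomial.X - Polynomial.C (β * c⁻¹))).prod ∣ g := by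
    have h1 := map_dvd (Polynomial.eval₂RingHom (Polynomial.C : L →+* L[X])
      (Polynomial.C c * Polynomial.X)) hdvd
    rw [map_multiset_prod, Multiset.map_map] at h1
    have h2 : (⇑(Polynomial.eval₂RingHom (Polynomial.C : L →+* L[X])
        (Polynomial.C c * Polynomial.X)) ∘ (fun β : L => Polynomial.X - Polynomial.C β))
        = fun β : L => Polynomial.C c * (Polynomial.X - Polynomial.C (β * c⁻¹)) := by
      funext β
      show Polynomial.eval₂ Polynomial.C (Polynomial.C c * Polynomial.X)
        (Polynomial.X - Polynomial.C β) = _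
      rw [Polynomial.eval₂_sub, Polynomial.eval₂_X, Polynomial.eval₂_C, mul_sub,
        ← Polynomial.C_mul]
      congr 2
      field_simp
    rw [h2, Multiset.prod_map_mul] at h1
    have h3 : (Multiset.map (fun _ : L => Polynomial.C c) m).prod =
        Polynomial.C c ^ Multiset.card m := by
      rw [Multiset.map_const', Multiset.prod_replicate]
    rw [h3] at h1
    exact dvd_of_mul_left_dvd h1
  have hdvdCdg : (m.map (fun β => Polynomial.X - Polynomial.C (β * c⁻¹))).prod ∣
      Polynomial.C d * g := hdvdg.mul_left _
  -- P divides H over the valuation ring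
  have hPmap : P.map (valRing L v hv0 hvmul hvadd).subtype =
      (m.map (fun β => Polynomial.X - Polynomial.C (β * c⁻¹))).prod := by
    rw [hPdef, Polynomial.map_multiset_prod, Multiset.map_map]
    have : Multiset.map ((Polynomial.map (valRing L v hv0 hvmul hvadd).subtype) ∘
        (fun β => Polynomial.X - Polynomial.C (ub β))) m.attach
        = Multiset.map ((fun β : L => Polynomial.X - Polynomial.C (β * c⁻¹)) ∘ Subtype.val)
            m.attach := by
      apply Multiset.map_congr rfl
      intro β _
      show Polynomial.map _ (Polynomial.X - Polynomial.C (ub β)) = _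
      rw [Polynomial.map_sub, Polynomial.map_X, Polynomial.map_C]
      rfl
    rw [this, ← Multiset.map_map, Multiset.attach_map_val]
  have hPH : P ∣ H := by
    rw [← Polynomial.map_dvd_map (valRing L v hv0 hvmul hvadd).subtype
      (Subtype.val_injective) hPmonic, hPmap, hHmap]
    exact hdvdCdg
  -- the reduced multiset
  set w : Multiset ((valRing L v hv0 hvmul hvadd) ⧸ (valIdeal L v hv0 hvmul hvadd)) :=
    m.attach.map (fun β => mkq (ub β)) with hwdef
  have hwcard : Multiset.card w = Multiset.card m := by
    rw [hwdef, Multiset.card_map, Multiset.card_attach]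
  have hwne : ∀ r ∈ w, r ≠ 0 := by
    intro r hr
    rw [hwdef, Multiset.mem_map] at hr
    obtain ⟨β, _, rfl⟩ := hr
    rw [hmkq, Ne, Ideal.Quotient.eq_zero_iff_mem, mem_valIdeal hv0 hvmul hvadd]
    change ¬ 0 < v (β.1 * c⁻¹)
    rw [hub β.1 β.2]
    exact lt_irrefl 0
  have hwdvd : (w.map (fun r => Polynomial.X - Polynomial.C r)).prod ∣ Hb := by
    have h1 := map_dvd (Polynomial.mapRingHom mkq) hPH
    rw [Polynomial.coe_mapRingHom] at h1
    have h2 : P.map mkq = (w.map (fun r => Polynomial.X - Polynomial.C r)).prod := by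
      rw [hPdef, Polynomial.map_multiset_prod, Multiset.map_map, hwdef, Multiset.map_map]
      congr 1
      apply Multiset.map_congr rfl
      intro β _
      show Polynomial.map mkq (Polynomial.X - Polynomial.C (ub β)) = _
      rw [Polynomial.map_sub, Polynomial.map_X, Polynomial.map_C]
      rfl
    rw [h2] at h1
    exact h1
  exact ⟨Hb, w, hHbne, hHbsupp, hwcard, hwne, hwdvd⟩

end Constr
section Core

lemma count_le_rootMultiplicity {K : Type*} [CommRing K] (Hb : Polynomial K) (hHb : Hb ≠ 0)
    (w : Multiset K)
    (hdvd : (w.map (fun r => Polynomial.X - Polynomial.C r)).prod ∣ Hb) (r : K) :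
    w.count r ≤ Hb.rootMultiplicity r := by
  rw [Polynomial.le_rootMultiplicity_iff hHb]
  have h1 : Multiset.replicate (w.count r) r ≤ w := by
    rw [Multiset.le_iff_count]
    intro a
    rw [Multiset.count_replicate]
    split_ifs with h
    · subst h; exact le_rfl
    · exact Nat.zero_le _
  have h2 := Multiset.prod_dvd_prod_of_le (Multiset.map_le_map
    (f := fun r => Polynomial.X - Polynomial.C r) h1)
  rw [Multiset.map_replicate, Multiset.prod_replicate] at h2
  exact h2.trans hdvd

variable {L : Type*} [Field L] {v : L → WithTop ℝ}
variable (hv0 : ∀ x, v x = ⊤ ↔ x = 0)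
variable (hvmul : ∀ x y, v (x * y) = v x + v y)
variable (hvadd : ∀ x y, min (v x) (v y) ≤ v (x + y))

lemma core1 (t b : ℕ)
    (hyp : ∀ g : Polynomial
        ((valRing L v hv0 hvmul hvadd) ⧸ (valIdeal L v hv0 hvmul hvadd)),
      g ≠ 0 → g.support.card ≤ t + 1 →
      ∀ S : Finset ((valRing L v hv0 hvmul hvadd) ⧸ (valIdeal L v hv0 hvmul hvadd)),
        (∀ r ∈ S, r ≠ 0) → (∑ r ∈ S, g.rootMultiplicity r) ≤ b)
    (f : L[X]) (hf : f ≠ 0) (hsupp : f.support.card ≤ t + 1)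
    (c : L) (hc : c ≠ 0) (m : Multiset L) (hm : ∀ β ∈ m, β ≠ 0 ∧ v β = v c)
    (hdvd : (m.map (fun β => Polynomial.X - Polynomial.C β)).prod ∣ f) :
    Multiset.card m ≤ b := by
  obtain ⟨Hb, w, hHbne, hHbsupp, hwcard, hwne, hwdvd⟩ :=
    construct hv0 hvmul hvadd f hf c hc m hm hdvd
  rw [← hwcard, ← Multiset.toFinset_sum_count_eq]
  calc ∑ r ∈ w.toFinset, w.count r ≤ ∑ r ∈ w.toFinset, Hb.rootMultiplicity r :=
        Finset.sum_le_sum (fun r _ => count_le_rootMultiplicity Hb hHbne w hwdvd r)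
    _ ≤ b := hyp Hb hHbne (hHbsupp.trans hsupp) w.toFinset
        (fun r hr => hwne r (Multiset.mem_toFinset.mp hr))

lemma core2 (hvint : ∀ n : ℤ, n ≠ 0 → v ((n : ℤ) : L) = 0) (t b : ℕ)
    (hyp : ∀ g : Polynomial
        ((valRing L v hv0 hvmul hvadd) ⧸ (valIdeal L v hv0 hvmul hvadd)),
      g ≠ 0 → g.support.card ≤ t + 1 →
      ∀ S : Finset ((valRing L v hv0 hvmul hvadd) ⧸ (valIdeal L v hv0 hvmul hvadd)),
        (∀ r ∈ S, r ≠ 0 ∧ Polynomial.eval r g = 0) → S.card ≤ b)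
    (f : L[X]) (hf : f ≠ 0) (hsupp : f.support.card ≤ t + 1)
    (c : L) (hc : c ≠ 0) (m : Multiset L) (hm : ∀ β ∈ m, β ≠ 0 ∧ v β = v c)
    (hdvd : (m.map (fun β => Polynomial.X - Polynomial.C β)).prod ∣ f) :
    Multiset.card m ≤ t * b := by
  haveI := valQuot_isDomain hv0 hvmul hvadd
  haveI := valQuot_charZero hv0 hvmul hvadd hvint
  obtain ⟨Hb, w, hHbne, hHbsupp, hwcard, hwne, hwdvd⟩ :=
    construct hv0 hvmul hvadd f hf c hc m hm hdvd
  rw [← hwcard, ← Multiset.toFinset_sum_count_eq]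
  have hcount : ∀ r ∈ w.toFinset, w.count r ≤ t := by
    intro r hr
    have h1 : w.count r ≤ Hb.rootMultiplicity r :=
      count_le_rootMultiplicity Hb hHbne w hwdvd r
    have h2 : Hb.rootMultiplicity r < Hb.support.card :=
      rootMultiplicity_lt_card_support Hb.natDegree Hb le_rfl hHbne r
        (hwne r (Multiset.mem_toFinset.mp hr))
    have h3 : Hb.support.card ≤ t + 1 := hHbsupp.trans hsupp
    omega
  have hroots : w.toFinset.card ≤ b := by
    apply hyp Hb hHbne (hHbsupp.trans hsupp) w.toFinset
    intro r hr
    refine ⟨hwne r (Multiset.mem_toFinset.mp hr), ?_⟩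
    have h1 : 0 < w.count r := Multiset.count_pos.mpr (Multiset.mem_toFinset.mp hr)
    have h2 := count_le_rootMultiplicity Hb hHbne w hwdvd r
    exact (Polynomial.rootMultiplicity_pos hHbne).mp (by omega)
  calc ∑ r ∈ w.toFinset, w.count r ≤ ∑ r ∈ w.toFinset, t := Finset.sum_le_sum hcount
    _ = w.toFinset.card * t := by rw [Finset.sum_const, smul_eq_mul]
    _ ≤ b * t := Nat.mul_le_mul_right t hroots
    _ = t * b := Nat.mul_comm b t

end Core
section Newton

variable {L : Type*} [Field L] {v : L → WithTop ℝ}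
lemma newton (hv0 : ∀ x, v x = ⊤ ↔ x = 0)
    (hvmul : ∀ x y, v (x * y) = v x + v y)
    (hvadd : ∀ x y, min (v x) (v y) ≤ v (x + y)) (f : L[X]) (hf : f ≠ 0) (Γ : Finset (WithTop ℝ))
    (hΓ : ∀ γ ∈ Γ, ∃ β : L, β ≠ 0 ∧ Polynomial.IsRoot f β ∧ v β = γ) :
    Γ.card ≤ f.support.card - 1 := by
  classical
  set s := f.support with hs
  have hsne : s.Nonempty := Polynomial.support_nonempty.mpr hf
  set wr : ℕ → ℝ := fun i => (v (f.coeff i)).untopD 0 with hwr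
  have hwrspec : ∀ i ∈ s, v (f.coeff i) = ((wr i : ℝ) : WithTop ℝ) := by
    intro i hi
    obtain ⟨r, hr⟩ := vmy_exists_real hv0 (Polynomial.mem_support_iff.mp hi)
    have hwri : wr i = r := by rw [hwr]; simp [hr]
    rw [hr, hwri]
  set Smin : ℝ → Finset ℕ :=
    fun x => s.filter (fun i => ∀ j ∈ s, wr i + i * x ≤ wr j + j * x) with hSmin
  have hK1 : ∀ x : ℝ, (Smin x).Nonempty := by
    intro x
    obtain ⟨i, hi, hmin⟩ := Finset.exists_min_image s (fun i => wr i + i * x) hsne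
    exact ⟨i, Finset.mem_filter.mpr ⟨hi, hmin⟩⟩
  have hK2 : ∀ β : L, β ≠ 0 → Polynomial.IsRoot f β → ∀ x : ℝ,
      v β = (x : WithTop ℝ) → 1 < (Smin x).card := by
    intro β hβ0 hβr x hβx
    obtain ⟨i₀, hi₀⟩ := hK1 x
    have hi₀s : i₀ ∈ s := (Finset.mem_filter.mp hi₀).1
    have hi₀min : ∀ j ∈ s, wr i₀ + i₀ * x ≤ wr j + j * x := (Finset.mem_filter.mp hi₀).2
    by_contra hle
    push_neg at hle
    have huniq : ∀ j ∈ s, j ≠ i₀ → wr i₀ + i₀ * x < wr j + j * x := by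
      intro j hj hne
      rcases lt_or_eq_of_le (hi₀min j hj) with h | h
      · exact h
      · exfalso
        have hjmem : j ∈ Smin x := by
          refine Finset.mem_filter.mpr ⟨hj, fun k hk => ?_⟩
          rw [← h]
          exact hi₀min k hk
        have : 1 < (Smin x).card := Finset.one_lt_card.mpr ⟨i₀, hi₀, j, hjmem, (Ne.symm hne)⟩
        omega
    have hterm : ∀ j ∈ s, v (f.coeff j * β ^ j) = ((wr j + j * x : ℝ) : WithTop ℝ) := by
      intro j hj
      rw [hvmul, hwrspec j hj, vmy_pow hv0 hvmul β x hβx j, ← WithTop.coe_add]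
    have hne0 : f.coeff i₀ * β ^ i₀ ≠ 0 :=
      mul_ne_zero (Polynomial.mem_support_iff.mp hi₀s) (pow_ne_zero _ hβ0)
    have hvs := vsum_eq hv0 hvmul hvadd s (fun j => f.coeff j * β ^ j) i₀ hi₀s hne0
      (by
        intro j hj hne
        rw [hterm j hj, hterm i₀ hi₀s, WithTop.coe_lt_coe]
        exact huniq j hj hne)
    have hsum0 : (∑ j ∈ s, f.coeff j * β ^ j) = 0 := by
      have heval := hβr
      rw [Polynomial.IsRoot, Polynomial.eval_eq_sum, Polynomial.sum_def] at heval
      exact heval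
    rw [hsum0, (hv0 0).mpr rfl, hterm i₀ hi₀s] at hvs
    exact WithTop.coe_ne_top hvs.symm
  have hK3 : ∀ x y : ℝ, x < y → ∀ i ∈ Smin x, ∀ j ∈ Smin y, j ≤ i := by
    intro x y hxy i hi j hj
    have h1 := (Finset.mem_filter.mp hi).2 j (Finset.mem_filter.mp hj).1
    have h2 := (Finset.mem_filter.mp hj).2 i (Finset.mem_filter.mp hi).1
    have hji : (j : ℝ) ≤ (i : ℝ) := by nlinarith [h1, h2, hxy]
    exact_mod_cast hji
  set n₀ := s.min' hsne with hn₀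
  set xr : WithTop ℝ → ℝ := fun γ => γ.untopD 0 with hxrdef
  have hxr : ∀ γ ∈ Γ, γ = ((xr γ : ℝ) : WithTop ℝ) := by
    intro γ hγ
    obtain ⟨β, hβ0, _, hβv⟩ := hΓ γ hγ
    obtain ⟨x, hx⟩ := vmy_exists_real hv0 hβ0
    rw [← hβv, hx]
    simp [hxrdef]
  set ψ : WithTop ℝ → ℕ := fun γ => (Smin (xr γ)).max' (hK1 _) with hψ
  have hψcard : ∀ γ ∈ Γ, 1 < (Smin (xr γ)).card := by
    intro γ hγ
    obtain ⟨β, hβ0, hβr, hβv⟩ := hΓ γ hγ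
    refine hK2 β hβ0 hβr (xr γ) ?_
    rw [hβv]
    exact hxr γ hγ
  have hmem' : ∀ γ ∈ Γ, ψ γ ∈ s.erase n₀ := by
    intro γ hγ
    have hmax : ψ γ ∈ Smin (xr γ) := Finset.max'_mem _ _
    have hminmem : (Smin (xr γ)).min' (hK1 _) ∈ Smin (xr γ) := Finset.min'_mem _ _
    have hlt : (Smin (xr γ)).min' (hK1 _) < ψ γ :=
      Finset.min'_lt_max'_of_card _ (hψcard γ hγ)
    have hin : ψ γ ∈ s := (Finset.mem_filter.mp hmax).1
    have hmin's : (Smin (xr γ)).min' (hK1 _) ∈ s := (Finset.mem_filter.mp hminmem).1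
    have hle := Finset.min'_le s _ hmin's
    refine Finset.mem_erase.mpr ⟨?_, hin⟩
    rw [← hn₀] at hle
    omega
  have hinj : Set.InjOn ψ ↑Γ := by
    intro γ1 h1 γ2 h2 heq
    by_contra hne
    have hxne : xr γ1 ≠ xr γ2 := by
      intro h
      exact hne (by rw [hxr γ1 h1, hxr γ2 h2, h])
    have haux : ∀ γa ∈ Γ, ∀ γb ∈ Γ, xr γa < xr γb → ψ γa = ψ γb → False := by
      intro γa ha γb hb hab hpseq
      have h3 := hK3 (xr γa) (xr γb) hab _ (Finset.min'_mem (Smin (xr γa)) (hK1 _))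
        (ψ γb) (Finset.max'_mem _ _)
      have h4 : (Smin (xr γa)).min' (hK1 _) < ψ γa :=
        Finset.min'_lt_max'_of_card _ (hψcard γa ha)
      omega
    rcases lt_or_gt_of_ne hxne with hlt | hlt
    · exact haux γ1 h1 γ2 h2 hlt heq
    · exact haux γ2 h2 γ1 h1 hlt heq.symm
  have hcard := Finset.card_le_card_of_injOn ψ hmem' hinj
  rw [Finset.card_erase_of_mem (Finset.min'_mem s hsne)] at hcard
  exact hcard

end Newton
/-- Let `L` be a field with non-archimedean additive valuation
`v : L → ℝ ∪ {∞}` satisfying `v(n·1) = 0` for all nonzero integers `n`, with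
valuation ring `A`, maximal ideal `M` and residue field `K = A/M`, and let
`t ≥ 1`.  If every nonzero polynomial over `K` with at most `t+1` terms has at
most `b` nonzero roots counted with multiplicities (resp. distinct), then every
nonzero polynomial over `L` with at most `t+1` terms has at most `t²·b` nonzero
roots counted with multiplicities (resp. distinct):
`B_m(t,L) ≤ t²·B_m(t,K)` and `B₁(t,L) ≤ t²·B₁(t,K)`. -/
theorem roots_bound_sq_of_residue_bound (L : Type*) [Field L] (v : L → WithTop ℝ)
    (hv0 : ∀ x, v x = ⊤ ↔ x = 0)
    (hvmul : ∀ x y, v (x * y) = v x + v y)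
    (hvadd : ∀ x y, min (v x) (v y) ≤ v (x + y))
    (hvint : ∀ n : ℤ, n ≠ 0 → v ((n : ℤ) : L) = 0)
    (t b : ℕ) (ht : 1 ≤ t) :
    ((∀ g : Polynomial
        ((valRing L v hv0 hvmul hvadd) ⧸ (valIdeal L v hv0 hvmul hvadd)),
      g ≠ 0 → g.support.card ≤ t + 1 →
      ∀ S : Finset ((valRing L v hv0 hvmul hvadd) ⧸ (valIdeal L v hv0 hvmul hvadd)),
        (∀ r ∈ S, r ≠ 0) → (∑ r ∈ S, g.rootMultiplicity r) ≤ b) →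
      ∀ f : Polynomial L, f ≠ 0 → f.support.card ≤ t + 1 →
        (f.roots.filter (fun r => r ≠ 0)).card ≤ t ^ 2 * b) ∧
    ((∀ g : Polynomial
        ((valRing L v hv0 hvmul hvadd) ⧸ (valIdeal L v hv0 hvmul hvadd)),
      g ≠ 0 → g.support.card ≤ t + 1 →
      ∀ S : Finset ((valRing L v hv0 hvmul hvadd) ⧸ (valIdeal L v hv0 hvmul hvadd)),
        (∀ r ∈ S, r ≠ 0 ∧ Polynomial.eval r g = 0) → S.card ≤ b) →
      ∀ f : Polynomial L, f ≠ 0 → f.support.card ≤ t + 1 →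
        (f.roots.toFinset.filter (fun r => r ≠ 0)).card ≤ t ^ 2 * b) := by
  classical
  constructor
  · -- multiplicity version
    intro hyp f hf hsupp
    set M₀ := f.roots.filter (fun r => r ≠ 0) with hM₀
    set Γ := M₀.toFinset.image v with hΓdef
    have hΓle : Γ.card ≤ t := by
      have h1 := newton hv0 hvmul hvadd f hf Γ (by
        intro γ hγ
        rw [hΓdef, Finset.mem_image] at hγ
        obtain ⟨β, hβ, rfl⟩ := hγ
        rw [Multiset.mem_toFinset, hM₀, Multiset.mem_filter] at hβ
        exact ⟨β, hβ.2, (Polynomial.mem_roots hf).mp hβ.1, rfl⟩)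
      have h2 := hsupp
      omega
    have hper : ∀ γ, Multiset.card (M₀.filter (fun r => v r = γ)) =
        ∑ r ∈ M₀.toFinset.filter (fun r => v r = γ), M₀.count r := by
      intro γ
      rw [← Multiset.toFinset_sum_count_eq, Multiset.toFinset_filter]
      apply Finset.sum_congr rfl
      intro r hr
      rw [Multiset.count_filter, if_pos (Finset.mem_filter.mp hr).2]
    have hdecomp : Multiset.card M₀ =
        ∑ γ ∈ Γ, Multiset.card (M₀.filter (fun r => v r = γ)) := by
      rw [Finset.sum_congr rfl (fun γ _ => hper γ),
        Finset.sum_fiberwise_of_maps_to (fun r hr => Finset.mem_image_of_mem v hr),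
        Multiset.toFinset_sum_count_eq]
    have hclass : ∀ γ ∈ Γ, Multiset.card (M₀.filter (fun r => v r = γ)) ≤ b := by
      intro γ hγ
      rw [hΓdef, Finset.mem_image] at hγ
      obtain ⟨c, hcmem, hcv⟩ := hγ
      rw [Multiset.mem_toFinset, hM₀, Multiset.mem_filter] at hcmem
      apply core1 hv0 hvmul hvadd t b hyp f hf hsupp c hcmem.2
      · intro β hβ
        rw [Multiset.mem_filter] at hβ
        have hβM := hβ.1
        rw [hM₀, Multiset.mem_filter] at hβM
        exact ⟨hβM.2, hβ.2.trans hcv.symm⟩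
      · have hle : M₀.filter (fun r => v r = γ) ≤ f.roots :=
          le_trans (Multiset.filter_le _ _) (Multiset.filter_le _ _)
        exact (Multiset.prod_dvd_prod_of_le (Multiset.map_le_map hle)).trans
          (Polynomial.prod_multiset_X_sub_C_dvd f)
    calc Multiset.card M₀ = ∑ γ ∈ Γ, Multiset.card (M₀.filter (fun r => v r = γ)) := hdecomp
      _ ≤ ∑ _γ ∈ Γ, b := Finset.sum_le_sum hclass
      _ = Γ.card * b := by rw [Finset.sum_const, smul_eq_mul]
      _ ≤ t * b := Nat.mul_le_mul_right b hΓle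
      _ ≤ t ^ 2 * b := Nat.mul_le_mul_right b (by nlinarith)
  · -- distinct version
    intro hyp f hf hsupp
    set S₀ := f.roots.toFinset.filter (fun r => r ≠ 0) with hS₀
    set Γ := S₀.image v with hΓdef
    have hΓle : Γ.card ≤ t := by
      have h1 := newton hv0 hvmul hvadd f hf Γ (by
        intro γ hγ
        rw [hΓdef, Finset.mem_image] at hγ
        obtain ⟨β, hβ, rfl⟩ := hγ
        rw [hS₀, Finset.mem_filter, Multiset.mem_toFinset] at hβ
        exact ⟨β, hβ.2, (Polynomial.mem_roots hf).mp hβ.1, rfl⟩)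
      have h2 := hsupp
      omega
    have hdecomp : S₀.card = ∑ γ ∈ Γ, (S₀.filter (fun r => v r = γ)).card :=
      Finset.card_eq_sum_card_fiberwise (fun r hr => Finset.mem_image_of_mem v hr)
    have hclass : ∀ γ ∈ Γ, (S₀.filter (fun r => v r = γ)).card ≤ t * b := by
      intro γ hγ
      rw [hΓdef, Finset.mem_image] at hγ
      obtain ⟨c, hcmem, hcv⟩ := hγ
      rw [hS₀, Finset.mem_filter, Multiset.mem_toFinset] at hcmem
      set F := S₀.filter (fun r => v r = γ) with hF
      have hFroots : ∀ a, a ∈ F → a ∈ f.roots := by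
        intro a ha
        have h1 := (Finset.mem_filter.mp ha).1
        rw [hS₀, Finset.mem_filter, Multiset.mem_toFinset] at h1
        exact h1.1
      have hFsub : F.val ≤ f.roots := by
        rw [Multiset.le_iff_count]
        intro a
        by_cases ha : a ∈ F
        · have h1 : F.val.count a = 1 := Multiset.count_eq_one_of_mem F.nodup ha
          rw [h1]
          exact Multiset.one_le_count_iff_mem.mpr (hFroots a ha)
        · rw [Multiset.count_eq_zero_of_notMem (fun h => ha (Finset.mem_def.mpr h))]
          exact Nat.zero_le _
      have heq : F.card = Multiset.card F.val := rfl
      rw [heq]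
      apply core2 hv0 hvmul hvadd hvint t b hyp f hf hsupp c hcmem.2
      · intro β hβ
        have hβF : β ∈ F := Finset.mem_def.mpr hβ
        have h1 := Finset.mem_filter.mp hβF
        have h2 := h1.1
        rw [hS₀, Finset.mem_filter, Multiset.mem_toFinset] at h2
        exact ⟨h2.2, h1.2.trans hcv.symm⟩
      · exact (Multiset.prod_dvd_prod_of_le (Multiset.map_le_map hFsub)).trans
          (Polynomial.prod_multiset_X_sub_C_dvd f)
    calc S₀.card = ∑ γ ∈ Γ, (S₀.filter (fun r => v r = γ)).card := hdecomp
      _ ≤ ∑ _γ ∈ Γ, t * b := Finset.sum_le_sum hclass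
      _ = Γ.card * (t * b) := by rw [Finset.sum_const, smul_eq_mul]
      _ ≤ t * (t * b) := Nat.mul_le_mul_right (t * b) hΓle
      _ = t ^ 2 * b := by ring
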